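/- For n ≥ 1, the number of Dyck n-paths with exactly one return and interior (path with first and last step removed) having terminal descent of even length equals the number of early-hill-free Dyck n-paths ending in UD. -/

import Mathlib

inductive Step : Type
  | U : Step
  | D : Step
deriving DecidableEq

open Step

/-- The path stays weakly above ground level: every prefix has at least as many `U`s as `D`s. -/
def NonnegPrefixes (p : List Step) : Prop :=
  ∀ q : List Step, q <+: p → q.count D ≤ q.count U

/-- A Dyck path: equally many upsteps and downsteps, never dipping below ground level. -/
def IsDyck (p : List Step) : Prop :=
  p.count U = p.count D ∧ NonnegPrefixes p

/-- A Dyck `n`-path: a Dyck path with `n` upsteps (semilength `n`). -/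
def IsDyckN (n : ℕ) (p : List Step) : Prop :=
  IsDyck p ∧ p.count U = n

/-- Length of the terminal descent (maximal final run of downsteps). -/
def termDesc (p : List Step) : ℕ :=
  (p.reverse.takeWhile (fun s => s == D)).length

/-- Number of returns: downsteps that bring the path back to ground level. -/
def returnCount (p : List Step) : ℕ :=
  ((List.range p.length).filter
    (fun i => (p.take (i+1)).count U == (p.take (i+1)).count D)).length

/-- `GroundDescent p q m r` : `p = q ++ D^m ++ r` is a maximal run of `m ≥ 1` downsteps
ending at ground level. -/
def GroundDescent (p q : List Step) (m : ℕ) (r : List Step) : Prop :=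
  p = q ++ List.replicate m D ++ r ∧ 1 ≤ m ∧
  q.getLast? ≠ some D ∧ r.head? ≠ some D ∧
  q.count U = q.count D + m

/-- All descents to ground level other than the terminal one have odd length. -/
def OddNonterminalGroundDescents (p : List Step) : Prop :=
  ∀ q m r, GroundDescent p q m r → r ≠ [] → Odd m

/-- No occurrence of `UD` starting at ground level. -/
def HillFree (p : List Step) : Prop :=
  ∀ q r : List Step, p = q ++ [U, D] ++ r → q.count U ≠ q.count D

/-- No occurrence of `UDU` starting at ground level. -/
def EarlyHillFree (p : List Step) : Prop :=
  ∀ q r : List Step, p = q ++ [U, D, U] ++ r → q.count U ≠ q.count D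

/-- Number of early hills: occurrences of `UDU` starting at ground level. -/
def earlyHillCount (p : List Step) : ℕ :=
  ((List.range p.length).filter
    (fun i => decide ((p.take i).count U = (p.take i).count D ∧
      (p.drop i).take 3 = [U, D, U]))).length

-- ————— forests —————
inductive T : Type
  | node : List T → T

def toPath : List T → List Step
  | [] => []
  | T.node g :: rest => U :: (toPath g ++ D :: toPath rest)

@[simp] lemma toPath_nil : toPath [] = [] := by rw [toPath]
@[simp] lemma toPath_cons (g rest : List T) :
    toPath (T.node g :: rest) = U :: (toPath g ++ D :: toPath rest) := by rw [toPath]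

lemma prefix_split {α : Type*} {q a b : List α} (h : q <+: a ++ b) :
    q <+: a ∨ ∃ c, c <+: b ∧ q = a ++ c := by
  by_cases hl : q.length ≤ a.length
  · left
    exact List.prefix_of_prefix_length_le h (a.prefix_append b) hl
  · right
    have ha : a <+: q :=
      List.prefix_of_prefix_length_le (a.prefix_append b) h (le_of_not_ge hl)
    rcases ha with ⟨c, hc⟩
    refine ⟨c, ?_, hc.symm⟩
    rcases h with ⟨r, hr⟩
    rw [← hc, List.append_assoc] at hr
    exact ⟨r, (List.append_cancel_left hr)⟩

lemma toPath_append (a b : List T) : toPath (a ++ b) = toPath a ++ toPath b := by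
  induction a with
  | nil => simp
  | cons t rest ih => cases t with | node g => simp [ih]

@[simp] lemma count_UD_ne : (U == D) = false := rfl
@[simp] lemma count_DU_ne : (D == U) = false := rfl

lemma toPath_dyck (F : List T) : IsDyck (toPath F) := by
  induction F using toPath.induct with
  | case1 =>
    refine ⟨by simp, fun q hq => ?_⟩
    have : q = [] := List.prefix_nil.mp (by simpa using hq)
    simp [this]
  | case2 g rest ihg ihr =>
    obtain ⟨hg1, hg2⟩ := ihg
    obtain ⟨hr1, hr2⟩ := ihr
    constructor
    · simp [List.count_append, List.count_cons, hg1, hr1]; omega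
    · intro q hq
      rcases hq with ⟨r, hr⟩
      cases q with
      | nil => simp
      | cons x q' =>
        have hx : x = U := by
          have := congrArg List.head? hr; simpa using this
        subst hx
        have h2 : q' ++ r = toPath g ++ D :: toPath rest := by
          have := congrArg List.tail hr; simpa using this
        rcases prefix_split ⟨r, h2⟩ with h | ⟨c, hc, he⟩
        · have := hg2 q' h
          simp [List.count_cons]
          omega
        · cases c with
          | nil =>
            simp at he; subst he
            simp [List.count_cons, List.count_append, hg1]
          | cons y c' =>
            rcases hc with ⟨r', hr'⟩
            have hy : y = D := by simpa using congrArg List.head? hr'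
            subst hy
            have hc'pre : c' <+: toPath rest := ⟨r', by simpa using congrArg List.tail hr'⟩
            have := hr2 c' hc'pre
            subst he
            simp [List.count_cons, List.count_append, hg1]
            omega

lemma toPath_count_eq (F : List T) : (toPath F).count U = (toPath F).count D :=
  (toPath_dyck F).1

-- balanced-prefix split lemma
lemma split_balanced {F : List T} {q r : List Step} (h : toPath F = q ++ r)
    (hb : q.count U = q.count D) :
    ∃ F1 F2, F = F1 ++ F2 ∧ toPath F1 = q ∧ toPath F2 = r := by
  induction F generalizing q r with
  | nil =>
    simp at h
    exact ⟨[], [], by simp, by simp [h.1], by simp [h.2]⟩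
  | cons t rest ih =>
    cases t with | node g =>
    cases q with
    | nil => exact ⟨[], T.node g :: rest, by simp, by simp, by simpa using h⟩
    | cons x q' =>
      have hx : x = U := by
        have := congrArg List.head? h; simpa using this.symm
      subst hx
      have h2 : q' ++ r = toPath g ++ D :: toPath rest := by
        have := congrArg List.tail h; simpa using this.symm
      have hbq' : q'.count D = q'.count U + 1 := by
        simp [List.count_cons] at hb; omega
      rcases prefix_split ⟨r, h2⟩ with hpre | ⟨c, hc, he⟩
      · exfalso
        have := (toPath_dyck g).2 q' hpre
        omega
      · cases c with
        | nil =>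
          exfalso
          simp at he; subst he
          have h1 := toPath_count_eq g
          omega
        | cons y c' =>
          subst he
          have h34 : y = D ∧ c' ++ r = toPath rest := by
            have h2' := h2
            rw [List.append_assoc] at h2'
            have := List.append_cancel_left h2'
            simpa using this
          obtain ⟨hy, h4⟩ := h34
          subst hy
          have hbc' : c'.count U = c'.count D := by
            have h1 := toPath_count_eq g
            simp [List.count_cons, List.count_append] at hbq'
            omega
          obtain ⟨F1, F2, hF, hF1, hF2⟩ := ih h4.symm hbc'
          exact ⟨T.node g :: F1, F2, by simp [hF], by simp [hF1], hF2⟩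
-- arch equality
lemma arch_eq_aux {a b x y : List Step} (hab : a <+: b) (ha : IsDyck a) (hb : IsDyck b)
    (h : a ++ D :: x = b ++ D :: y) : a = b := by
  rcases hab with ⟨t, ht⟩
  cases t with
  | nil => simpa using ht
  | cons z t' =>
    exfalso
    subst ht
    rw [List.append_assoc] at h
    have h2 : D :: x = z :: (t' ++ D :: y) := by
      have := List.append_cancel_left h; simpa using this
    have hz : z = D := by simpa using (congrArg List.head? h2).symm
    subst hz
    have := hb.2 (a ++ [D]) ⟨t', by simp⟩
    have h1 := ha.1
    simp [List.count_append, List.count_cons] at this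
    omega

lemma arch_eq {a b x y : List Step} (ha : IsDyck a) (hb : IsDyck b)
    (h : a ++ D :: x = b ++ D :: y) : a = b ∧ x = y := by
  have hab : a <+: b ∨ b <+: a := by
    have h1 : a <+: a ++ D :: x := ⟨D :: x, rfl⟩
    have h2 : b <+: a ++ D :: x := ⟨D :: y, h.symm⟩
    exact List.prefix_or_prefix_of_prefix h1 h2
  have heq : a = b := by
    rcases hab with h' | h'
    · exact arch_eq_aux h' ha hb h
    · exact (arch_eq_aux h' hb ha h.symm).symm
  subst heq
  refine ⟨rfl, ?_⟩
  have := List.append_cancel_left h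
  simpa using this

theorem toPath_inj : ∀ (F G : List T), toPath F = toPath G → F = G
  | [], [], _ => rfl
  | [], T.node h :: r, he => by simp at he
  | T.node g :: r, [], he => by simp at he
  | T.node g :: r, T.node h :: r', he => by
    simp only [toPath_cons, List.cons.injEq, true_and] at he
    obtain ⟨h1, h2⟩ := arch_eq (toPath_dyck g) (toPath_dyck h) he
    rw [toPath_inj g h h1, toPath_inj r r' h2]

lemma toPath_surj : ∀ (p : List Step), IsDyck p → ∃ F, toPath F = p := by
  suffices H : ∀ n p, p.length = n → IsDyck p → ∃ F, toPath F = p by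
    intro p hp; exact H p.length p rfl hp
  intro n
  induction n using Nat.strong_induction_on with
  | _ n ih =>
  intro p hl hd
  cases p with
  | nil => exact ⟨[], by simp⟩
  | cons x p' =>
    have hx : x = U := by
      cases x
      · rfl
      · exfalso
        have := hd.2 [D] ⟨p', rfl⟩
        simp at this
    subst hx
    have hbal : p'.count D = p'.count U + 1 := by
      have := hd.1; simp [List.count_cons] at this; omega
    have hS : (p'.take p'.length).count D = (p'.take p'.length).count U + 1 := by
      simpa using hbal
    have hex : ∃ i, (p'.take i).count D = (p'.take i).count U + 1 := ⟨p'.length, hS⟩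
    classical
    obtain ⟨i0, hi0S, hi0min, hi0le⟩ :
        ∃ i0, ((p'.take i0).count D = (p'.take i0).count U + 1) ∧
          (∀ j, j < i0 → ¬ ((p'.take j).count D = (p'.take j).count U + 1)) ∧
          i0 ≤ p'.length :=
      ⟨Nat.find hex, Nat.find_spec hex, fun j hj => Nat.find_min hex hj, Nat.find_le hS⟩
    have hi0pos : 0 < i0 := by
      rcases Nat.eq_zero_or_pos i0 with h0 | h0
      · rw [h0] at hi0S; simp at hi0S
      · exact h0
    obtain ⟨A, hA⟩ : ∃ A, p'.take (i0 - 1) = A := ⟨_, rfl⟩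
    have hlt : i0 - 1 < p'.length := by omega
    obtain ⟨z, hz⟩ : ∃ z, p'[i0-1]? = some z := ⟨_, List.getElem?_eq_getElem hlt⟩
    have htake : p'.take i0 = A ++ [z] := by
      rw [← hA, show i0 = (i0-1)+1 by omega, List.take_succ, hz]
      simp
    have hAlen : A.length = i0 - 1 := by
      rw [← hA]; simp; omega
    have hApre : A <+: p' := hA ▸ List.take_prefix _ _
    have hnotS : ¬ (A.count D = A.count U + 1) := by
      rw [← hA]; exact hi0min _ (by omega)
    have hAnn : A.count D ≤ A.count U := by
      have h9 := hd.2 (U :: A) (by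
        rcases hApre with ⟨t, ht⟩
        exact ⟨t, by simp [ht]⟩)
      simp [List.count_cons] at h9
      omega
    rw [htake] at hi0S
    have hzD : z = D := by
      cases z
      · exfalso
        simp [List.count_append, List.count_cons] at hi0S
        omega
      · rfl
    subst hzD
    have hAbal : A.count U = A.count D := by
      simp [List.count_append, List.count_cons] at hi0S
      omega
    obtain ⟨B, hB⟩ : ∃ B, p'.drop i0 = B := ⟨_, rfl⟩
    have hsplit : p' = A ++ [D] ++ B := by
      rw [← htake, ← hB, List.take_append_drop]
    -- A is Dyck
    have hADyck : IsDyck A := by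
      refine ⟨hAbal, ?_⟩
      intro s hs
      have hsp' : s <+: p' := hs.trans hApre
      have hsn : s.count D ≤ s.count U + 1 := by
        have h9 := hd.2 (U :: s) (by
          rcases hsp' with ⟨t, ht⟩; exact ⟨t, by simp [ht]⟩)
        simp [List.count_cons] at h9; omega
      by_contra hcon
      have heq : s.count D = s.count U + 1 := by omega
      have hslen : s.length ≤ i0 - 1 := by
        have := hs.length_le; omega
      have hst : p'.take s.length = s := (List.prefix_iff_eq_take.mp hsp').symm
      exact hi0min s.length (by omega) (by rw [hst]; omega)
    -- B is Dyck
    have hBDyck : IsDyck B := by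
      constructor
      · have h1 : p'.count D = A.count D + 1 + B.count D := by
          rw [hsplit]; simp [List.count_append]; omega
        have h2 : p'.count U = A.count U + B.count U := by
          rw [hsplit]; simp [List.count_append]
        omega
      · intro t ht
        have hpre : (A ++ [D]) ++ t <+: p' := by
          rcases ht with ⟨u, hu⟩
          exact ⟨u, by rw [hsplit, ← hu]; simp⟩
        have h9 := hd.2 (U :: ((A ++ [D]) ++ t)) (by
          rcases hpre with ⟨u, hu⟩; exact ⟨u, by rw [← hu]; simp⟩)
        simp [List.count_cons, List.count_append, hAbal] at h9
        omega
    have hAlen2 : A.length < n := by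
      rw [← hl]; simp; omega
    have hBlen : B.length < n := by
      rw [← hl, ← hB]; simp
    obtain ⟨FA, hFA⟩ := ih A.length hAlen2 A rfl hADyck
    obtain ⟨FB, hFB⟩ := ih B.length hBlen B rfl hBDyck
    refine ⟨T.node FA :: FB, ?_⟩
    rw [toPath_cons, hFA, hFB, hsplit]
    simp

-- ————— terminal descent —————
def td : List T → ℕ
  | [] => 0
  | [T.node g] => td g + 1
  | _ :: t :: ts => td (t :: ts)

@[simp] lemma td_nil : td [] = 0 := by rw [td]
lemma td_single (g : List T) : td [T.node g] = td g + 1 := by rw [td]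
lemma td_cons2 (x t : T) (ts : List T) : td (x :: t :: ts) = td (t :: ts) := by rw [td]

lemma td_append_single (x : List T) (g : List T) : td (x ++ [T.node g]) = td g + 1 := by
  induction x with
  | nil => simpa using td_single g
  | cons y ys ih =>
    cases ys with
    | nil =>
      rw [List.cons_append]; simp only [List.nil_append]
      rw [td_cons2, td_single]
    | cons z zs =>
      rw [List.cons_append, List.cons_append, td_cons2, ← List.cons_append]
      exact ih

@[simp] lemma termDesc_nil : termDesc [] = 0 := by simp [termDesc]

lemma termDesc_append_D (xs : List Step) : termDesc (xs ++ [D]) = termDesc xs + 1 := by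
  simp [termDesc, List.takeWhile_cons]

lemma termDesc_append_of_U {b : List Step} (a : List Step) (hb : U ∈ b) :
    termDesc (a ++ b) = termDesc b := by
  simp only [termDesc, List.reverse_append]
  rw [List.takeWhile_append]
  have hne : (b.reverse.takeWhile (fun s => s == D)).length ≠ b.reverse.length := by
    intro h
    have heq : b.reverse.takeWhile (fun s => s == D) = b.reverse :=
      (List.takeWhile_prefix _).eq_of_length h
    have := List.takeWhile_eq_self_iff.mp heq U (by simpa using hb)
    simp at this
  rw [if_neg hne]

lemma mem_U_toPath {F : List T} (h : F ≠ []) : U ∈ toPath F := by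
  cases F with
  | nil => exact absurd rfl h
  | cons t r => cases t with | node g => simp

lemma termDesc_U_toPath (g : List T) : termDesc (U :: toPath g) = termDesc (toPath g) := by
  by_cases h : g = []
  · subst h; simp [termDesc]
  · exact termDesc_append_of_U [U] (mem_U_toPath h)

lemma termDesc_toPath (F : List T) : termDesc (toPath F) = td F := by
  induction F using toPath.induct with
  | case1 => simp
  | case2 g rest ihg ihr =>
    cases rest with
    | nil =>
      have : toPath [T.node g] = (U :: toPath g) ++ [D] := by simp
      rw [this, termDesc_append_D, termDesc_U_toPath, ihg, td_single]
    | cons t ts =>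
      have h1 : toPath (T.node g :: t :: ts) = (U :: (toPath g ++ [D])) ++ toPath (t :: ts) := by
        simp
      rw [h1, termDesc_append_of_U _ (mem_U_toPath (by simp)), ihr, td_cons2]

-- ————— size —————
def sz (F : List T) : ℕ := (toPath F).count U

@[simp] lemma sz_nil : sz [] = 0 := by simp [sz]
lemma sz_cons (g rest : List T) : sz (T.node g :: rest) = sz g + sz rest + 1 := by
  simp [sz, List.count_cons, List.count_append]
lemma sz_append (a b : List T) : sz (a ++ b) = sz a + sz b := by
  simp [sz, toPath_append, List.count_append]

lemma toPath_eq_nil {F : List T} (h : toPath F = []) : F = [] := by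
  cases F with
  | nil => rfl
  | cons t r => cases t with | node g => simp at h

-- ————— return count —————
lemma take_one_arch (A B : List Step) (i : ℕ) (hi : i ≤ A.length) :
    (U :: (A ++ B)).take (i+1) = U :: A.take i := by
  simp [List.take_cons, List.take_append_of_le_length hi]

lemma returnCount_single (g : List T) : returnCount (toPath [T.node g]) = 1 := by
  have hA := toPath_dyck g
  rw [returnCount]
  have hlen : (toPath [T.node g]).length = (toPath g).length + 2 := by simp
  have hform : toPath [T.node g] = U :: (toPath g ++ [D]) := by simp
  rw [hlen, List.range_succ, List.filter_append]
  have h1 : (List.range ((toPath g).length + 1)).filter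
      (fun i => (((toPath [T.node g]).take (i+1)).count U ==
        ((toPath [T.node g]).take (i+1)).count D)) = [] := by
    rw [List.filter_eq_nil_iff]
    intro i hi
    rw [List.mem_range] at hi
    have hi' : i ≤ (toPath g).length := by omega
    rw [hform, take_one_arch _ _ _ hi']
    have := hA.2 ((toPath g).take i) (List.take_prefix _ _)
    simp [List.count_cons]
    omega
  rw [h1]
  have h3 : (toPath [T.node g]).take ((toPath g).length + 1 + 1) = toPath [T.node g] := by
    rw [List.take_of_length_le]; omega
  simp only [List.nil_append, List.filter_cons, h3]
  simp only [beq_iff_eq, List.count_cons, List.count_append]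
  simp only [toPath_cons, toPath_nil, List.count_cons, List.count_append, List.nil_append]
  rw [if_pos (by have := toPath_count_eq g; simp [List.count_cons, List.count_append]; omega)]
  simp

lemma returnCount_cons_cons (g : List T) (t : T) (ts : List T) :
    2 ≤ returnCount (toPath (T.node g :: t :: ts)) := by
  have hA := toPath_dyck g
  set p := toPath (T.node g :: t :: ts) with hp
  set A := toPath g with hAdef
  set B := toPath (t :: ts) with hBdef
  have hform : p = U :: (A ++ D :: B) := by simp [hp]; rfl
  have hBlen : 2 ≤ B.length := by
    cases t with | node h =>
    simp [hBdef]
    omega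
  have hlen : p.length = A.length + 2 + B.length := by rw [hform]; simp; omega
  set pred := (fun i => (((p.take (i+1)).count U == (p.take (i+1)).count D))) with hpred
  set i1 := A.length + 1 with hi1
  set i2 := p.length - 1 with hi2
  have hpred1 : pred i1 = true := by
    have htk : p.take (i1 + 1) = U :: (A ++ [D]) := by
      rw [hform, hi1]
      rw [show A ++ D :: B = (A ++ [D]) ++ B by simp]
      rw [take_one_arch _ _ _ (by simp)]
      rw [List.take_of_length_le (by simp)]
    simp only [hpred, htk]
    have := hA.1
    simp [List.count_cons, List.count_append]
    omega
  have hpred2 : pred i2 = true := by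
    have htk : p.take (i2 + 1) = p := by
      rw [List.take_of_length_le]
      omega
    simp only [hpred, htk]
    have := toPath_count_eq (T.node g :: t :: ts)
    rw [← hp] at this
    simp [this]
  have hmem1 : i1 ∈ (List.range p.length).filter pred :=
    List.mem_filter.mpr ⟨List.mem_range.mpr (by omega), hpred1⟩
  have hmem2 : i2 ∈ (List.range p.length).filter pred :=
    List.mem_filter.mpr ⟨List.mem_range.mpr (by omega), hpred2⟩
  have hne : i1 ≠ i2 := by omega
  have hsub : [i1, i2] ⊆ (List.range p.length).filter pred := by
    intro x hx
    simp at hx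
    rcases hx with h | h <;> subst h <;> assumption
  have hnd : ([i1, i2] : List ℕ).Nodup := by simp [hne]
  have hfin := (List.subperm_of_subset hnd hsub).length_le
  rw [returnCount]
  exact hfin

-- ————— early hills —————
lemma EHF_iff (G : List T) :
    EarlyHillFree (toPath G) ↔ ∀ F1 F2, G = F1 ++ T.node [] :: F2 → F2 = [] := by
  constructor
  · intro h F1 F2 hG
    by_contra hne
    cases F2 with
    | nil => exact hne rfl
    | cons t ts =>
      cases t with | node g =>
      refine h (toPath F1) (toPath g ++ D :: toPath ts) ?_ (toPath_count_eq F1)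
      rw [hG, toPath_append]
      simp
  · intro h q r hq hbal
    have hq' : toPath G = q ++ ([U, D, U] ++ r) := by simpa [List.append_assoc] using hq
    obtain ⟨F1, F2, hG, hF1, hF2⟩ := split_balanced (q := q) (r := [U,D,U] ++ r) hq' hbal
    cases F2 with
    | nil => simp at hF2
    | cons t ts =>
      cases t with | node g =>
      rw [toPath_cons] at hF2
      have htail : toPath g ++ D :: toPath ts = D :: U :: r := by
        have := congrArg List.tail hF2; simpa using this
      have hgnil : g = [] := by
        cases g with
        | nil => rfl
        | cons u us =>
          cases u with | node v =>
          exfalso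
          have := congrArg List.head? htail
          simp at this
      subst hgnil
      simp at htail
      have htsne : ts ≠ [] := by
        intro h0
        rw [h0] at htail
        simp at htail
      exact htsne (h F1 ts hG)

-- ————— the bijection on forests —————
def NoLeaf (G : List T) : Prop := T.node [] ∉ G

def psi : List T → List T
  | [] => []
  | T.node c :: G =>
    match c.getLast? with
    | some (T.node a) => c.dropLast ++ [T.node (a ++ [T.node (psi G)])]
    | none => []

@[simp] lemma psi_nil : psi [] = [] := by rw [psi]

lemma psi_cons (x a : List T) (G : List T) :
    psi (T.node (x ++ [T.node a]) :: G) = x ++ [T.node (a ++ [T.node (psi G)])] := by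
  rw [psi]
  simp

lemma node_decomp {c : List T} (h : c ≠ []) : ∃ x a, c = x ++ [T.node a] := by
  have := List.dropLast_append_getLast h
  cases hla : c.getLast h with
  | node a => exact ⟨c.dropLast, a, by rw [← hla, this]⟩

lemma noLeaf_cons {c : List T} {G : List T} (h : NoLeaf (T.node c :: G)) :
    c ≠ [] ∧ NoLeaf G := by
  constructor
  · intro h0; subst h0; exact h (by simp)
  · intro hm; exact h (by simp [hm])

lemma sz_single (g : List T) : sz [T.node g] = sz g + 1 := by
  rw [sz_cons]; simp

lemma psi_sz : ∀ G, NoLeaf G → sz (psi G) = sz G := by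
  intro G
  induction G with
  | nil => simp
  | cons t G' ih =>
    cases t with | node c =>
    intro h
    obtain ⟨hc, hG'⟩ := noLeaf_cons h
    obtain ⟨x, a, hxa⟩ := node_decomp hc
    subst hxa
    rw [psi_cons, sz_append, sz_single, sz_append, sz_single, sz_cons, sz_append, sz_single,
      ih hG']
    omega

lemma psi_even_td : ∀ G, NoLeaf G → Even (td (psi G)) := by
  intro G
  induction G with
  | nil => simp
  | cons t G' ih =>
    cases t with | node c =>
    intro h
    obtain ⟨hc, hG'⟩ := noLeaf_cons h
    obtain ⟨x, a, hxa⟩ := node_decomp hc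
    subst hxa
    rw [psi_cons, td_append_single, td_append_single]
    have hev := ih hG'
    have h2 : td (psi G') + 1 + 1 = td (psi G') + 2 := by omega
    rw [h2]
    exact hev.add even_two

lemma psi_inj : ∀ G1 G2, NoLeaf G1 → NoLeaf G2 → psi G1 = psi G2 → G1 = G2 := by
  intro G1
  induction G1 with
  | nil =>
    intro G2 _ h2 he
    cases G2 with
    | nil => rfl
    | cons t G' =>
      cases t with | node c =>
      obtain ⟨hc, _⟩ := noLeaf_cons h2
      obtain ⟨x, a, hxa⟩ := node_decomp hc
      subst hxa
      rw [psi_nil, psi_cons] at he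
      exact absurd he.symm (by simp)
  | cons t G1' ih =>
    intro G2 h1 h2 he
    cases t with | node c =>
    obtain ⟨hc, hG1'⟩ := noLeaf_cons h1
    obtain ⟨x, a, hxa⟩ := node_decomp hc
    subst hxa
    cases G2 with
    | nil =>
      rw [psi_nil, psi_cons] at he
      exact absurd he (by simp)
    | cons s G2' =>
      cases s with | node d =>
      obtain ⟨hd, hG2'⟩ := noLeaf_cons h2
      obtain ⟨y, b, hyb⟩ := node_decomp hd
      subst hyb
      rw [psi_cons, psi_cons] at he
      obtain ⟨hxy, hlast⟩ := List.append_inj' he rfl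
      simp only [List.cons.injEq, and_true, T.node.injEq] at hlast
      obtain ⟨hab, hpp⟩ := List.append_inj' hlast rfl
      simp only [List.cons.injEq, and_true, T.node.injEq] at hpp
      rw [hxy, hab, ih G2' hG1' hG2' hpp]

lemma psi_surj : ∀ F, Even (td F) → ∃ G, NoLeaf G ∧ psi G = F := by
  suffices H : ∀ n F, (toPath F).length = n → Even (td F) → ∃ G, NoLeaf G ∧ psi G = F by
    intro F hF; exact H _ F rfl hF
  intro n
  induction n using Nat.strong_induction_on with
  | _ n ih =>
  intro F hlen hev
  cases hF0 : F.getLast? with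
  | none =>
    have : F = [] := by
      cases F
      · rfl
      · simp at hF0
    exact ⟨[], by simp [NoLeaf, this], by simp [this]⟩
  | some t =>
    cases t with | node b =>
    have hFne : F ≠ [] := by intro h0; rw [h0] at hF0; simp at hF0
    have hFd : F = F.dropLast ++ [T.node b] := by
      conv_lhs => rw [← List.dropLast_append_getLast hFne]
      rw [List.getLast?_eq_getLast hFne] at hF0
      simp at hF0
      rw [hF0]
    have htdF : td F = td b + 1 := by rw [hFd, td_append_single]
    have hbne : b ≠ [] := by
      intro h0
      rw [h0] at htdF
      simp at htdF
      rw [htdF] at hev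
      simp at hev
    obtain ⟨a', hb0⟩ : ∃ a', b.getLast? = some a' := by
      cases hb : b.getLast? with
      | none => exact absurd (by cases b; rfl; simp at hb) hbne
      | some v => exact ⟨v, rfl⟩
    cases a' with | node b' =>
    have hbd : b = b.dropLast ++ [T.node b'] := by
      conv_lhs => rw [← List.dropLast_append_getLast hbne]
      rw [List.getLast?_eq_getLast hbne] at hb0
      simp at hb0
      rw [hb0]
    have htdb : td b = td b' + 1 := by rw [hbd, td_append_single]
    have hev' : Even (td b') := by
      rcases hev with ⟨k, hk⟩
      refine ⟨k - 1, ?_⟩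
      omega
    have hlt : (toPath b').length < n := by
      rw [← hlen]
      conv_rhs => rw [hFd]
      rw [toPath_append]
      conv_rhs => rw [hbd]
      simp [toPath_append]
      omega
    obtain ⟨G', hG'nl, hG'⟩ := ih _ hlt b' rfl hev'
    refine ⟨T.node (F.dropLast ++ [T.node b.dropLast]) :: G', ?_, ?_⟩
    · intro hm
      rcases List.mem_cons.mp hm with hm | hm
      · simp at hm
      · exact hG'nl hm
    · rw [psi_cons, hG']
      rw [← hbd, ← hFd]

-- ————— assembly —————
lemma interior_arch (A : List Step) : (U :: (A ++ [D])).dropLast.tail = A := by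
  have h : U :: (A ++ [D]) = (U :: A) ++ [D] := by simp
  rw [h, List.dropLast_concat]
  simp

lemma toPath_leaf : toPath [T.node []] = [U, D] := by simp

theorem stmt7' (n : ℕ) (hn : 1 ≤ n) :
    Nat.card {p : List Step // IsDyckN n p ∧ returnCount p = 1 ∧
      Even (termDesc p.dropLast.tail)} =
    Nat.card {p : List Step // IsDyckN n p ∧ EarlyHillFree p ∧
      ∃ q : List Step, p = q ++ [U, D]} := by
  -- equiv 1
  have e1 : {F : List T // sz F = n - 1 ∧ Even (td F)} ≃
      {p : List Step // IsDyckN n p ∧ returnCount p = 1 ∧ Even (termDesc p.dropLast.tail)} := by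
    refine Equiv.ofBijective (fun F => ⟨toPath [T.node F.val], ?_, ?_, ?_⟩) ⟨?_, ?_⟩
    · refine ⟨toPath_dyck _, ?_⟩
      have h5 := F.2.1
      simp only [sz] at h5
      rw [show toPath [T.node F.val] = U :: (toPath F.val ++ [D]) by simp]
      simp [List.count_cons, List.count_append]
      omega
    · exact returnCount_single _
    · rw [show toPath [T.node F.val] = U :: (toPath F.val ++ [D]) by simp,
        interior_arch, termDesc_toPath]
      exact F.2.2
    · intro F1 F2 h
      have := congrArg Subtype.val h
      simp only at this
      have h2 := toPath_inj _ _ this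
      simp at h2
      exact Subtype.ext h2
    · rintro ⟨p, ⟨hd, hcnt⟩, hret, hev⟩
      obtain ⟨F0, hF0⟩ := toPath_surj p hd
      cases F0 with
      | nil =>
        exfalso
        rw [← hF0] at hcnt
        simp at hcnt
        omega
      | cons t rest =>
        cases t with | node g =>
        cases rest with
        | cons t2 ts =>
          exfalso
          have := returnCount_cons_cons g t2 ts
          rw [hF0, hret] at this
          omega
        | nil =>
          refine ⟨⟨g, ?_, ?_⟩, ?_⟩
          · have h5 : (toPath [T.node g]).count U = n := by rw [hF0]; exact hcnt
            rw [show toPath [T.node g] = U :: (toPath g ++ [D]) by simp] at h5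
            simp only [sz]
            simp [List.count_cons, List.count_append] at h5
            omega
          · rw [← hF0, show toPath [T.node g] = U :: (toPath g ++ [D]) by simp,
              interior_arch, termDesc_toPath] at hev
            exact hev
          · exact Subtype.ext hF0
  -- equiv 2
  have e2 : {G : List T // sz G = n - 1 ∧ NoLeaf G} ≃
      {F : List T // sz F = n - 1 ∧ Even (td F)} := by
    refine Equiv.ofBijective
      (fun G => ⟨psi G.val, by rw [psi_sz _ G.2.2]; exact G.2.1, psi_even_td _ G.2.2⟩)
      ⟨?_, ?_⟩
    · intro G1 G2 h
      have := congrArg Subtype.val h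
      simp only at this
      exact Subtype.ext (psi_inj _ _ G1.2.2 G2.2.2 this)
    · rintro ⟨F, hsz, hev⟩
      obtain ⟨G, hnl, hG⟩ := psi_surj F hev
      refine ⟨⟨G, ?_, hnl⟩, Subtype.ext hG⟩
      rw [← psi_sz _ hnl, hG]
      exact hsz
  -- equiv 3
  have e3 : {G : List T // sz G = n - 1 ∧ NoLeaf G} ≃
      {p : List Step // IsDyckN n p ∧ EarlyHillFree p ∧ ∃ q : List Step, p = q ++ [U, D]} := by
    refine Equiv.ofBijective (fun G => ⟨toPath (G.val ++ [T.node []]), ?_, ?_, ?_⟩) ⟨?_, ?_⟩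
    · refine ⟨toPath_dyck _, ?_⟩
      have h5 := G.2.1
      simp only [sz] at h5
      rw [toPath_append, toPath_leaf]
      simp [List.count_append, List.count_cons]
      omega
    · rw [EHF_iff]
      intro F1 F2 hdec
      by_contra hne
      have h6 := congrArg List.dropLast hdec
      rw [List.dropLast_concat] at h6
      cases F2 with
      | nil => exact hne rfl
      | cons y ys =>
        refine G.2.2 ?_
        rw [h6, List.dropLast_append_of_ne_nil (by simp : (T.node [] :: y :: ys) ≠ [])]
        simp
    · exact ⟨toPath G.val, by rw [toPath_append, toPath_leaf]⟩
    · intro G1 G2 h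
      have := congrArg Subtype.val h
      simp only at this
      have h2 := toPath_inj _ _ this
      have h3 := List.append_inj' h2 rfl
      exact Subtype.ext h3.1
    · rintro ⟨p, ⟨hd, hcnt⟩, hehf, q, hq⟩
      obtain ⟨F0, hF0⟩ := toPath_surj p hd
      have hqbal : q.count U = q.count D := by
        have h1 := hd.1
        rw [hq] at h1
        simp [List.count_append, List.count_cons] at h1
        omega
      obtain ⟨F1, F2, hsplit, hF1, hF2⟩ := split_balanced (F := F0)
        (by rw [hF0, hq]) hqbal
      have hF2leaf : F2 = [T.node []] := by
        cases F2 with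
        | nil => simp at hF2
        | cons t ts =>
          cases t with | node h =>
          rw [toPath_cons] at hF2
          have htl : toPath h ++ D :: toPath ts = [D] := by
            have := congrArg List.tail hF2; simpa using this
          have hh : toPath h = [] ∧ toPath ts = [] := by
            cases hth : toPath h with
            | nil => rw [hth] at htl; simp at htl; simp [htl]
            | cons z zs =>
              exfalso
              rw [hth] at htl
              have h9 := congrArg List.length htl
              simp at h9
          rw [toPath_eq_nil hh.1, toPath_eq_nil hh.2]
      subst hF2leaf
      refine ⟨⟨F1, ?_, ?_⟩, ?_⟩
      · have h5 : (toPath F0).count U = n := by rw [hF0]; exact hcnt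
        rw [hsplit, toPath_append, toPath_leaf] at h5
        simp only [sz]
        simp [List.count_append, List.count_cons] at h5
        omega
      · -- NoLeaf F1
        intro hm
        obtain ⟨s, t, hst⟩ := List.append_of_mem hm
        have hdec : F0 = s ++ T.node [] :: (t ++ [T.node []]) := by
          rw [hsplit, hst]; simp
        have := (EHF_iff F0).mp (by rw [hF0]; exact hehf) s (t ++ [T.node []]) hdec
        simp at this
      · exact Subtype.ext (by rw [hsplit] at hF0; exact hF0)
  rw [← Nat.card_congr e1, ← Nat.card_congr e3, Nat.card_congr e2]

/-- For `n ≥ 1`, Dyck `n`-paths with exactly one return whose interior has terminal descent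
of even length are equinumerous with early-hill-free Dyck `n`-paths ending in `UD`. -/
theorem stmt7 (n : ℕ) (hn : 1 ≤ n) :
    Nat.card {p : List Step // IsDyckN n p ∧ returnCount p = 1 ∧
      Even (termDesc p.dropLast.tail)} =
    Nat.card {p : List Step // IsDyckN n p ∧ EarlyHillFree p ∧
      ∃ q : List Step, p = q ++ [U, D]} := stmt7' n hn
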